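/- For ν ∈ ℝ fixed, K_ν(ω) ~ √(π/2) · e^{-ω} · ω^{-1/2} as ω → ∞, i.e., the ratio K_ν(ω)/(√(π/2) e^{-ω} ω^{-1/2}) tends to 1. -/

import Mathlib

open MeasureTheory Real Set Filter

/-- Integral representation of the modified Bessel function of the third kind. -/
noncomputable def besselK (ν ω : ℝ) : ℝ :=
  (1/2) * ∫ x in Ioi (0:ℝ), x ^ (ν - 1) * Real.exp (-(ω/2) * (x + x⁻¹))

namespace BesselKAux

/-- scaled integrand after the substitutions `x = exp u`, `u = s / √ω`. -/
noncomputable def G (ν ω s : ℝ) : ℝ :=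
  Real.exp (ν * (s / Real.sqrt ω) - ω * (Real.cosh (s / Real.sqrt ω) - 1))

lemma tendsto_sqrt_atTop : Tendsto Real.sqrt atTop atTop := by
  apply tendsto_atTop_atTop.2
  intro b
  refine ⟨b ^ 2, fun ω hω => (le_abs_self b).trans ?_⟩
  rw [← Real.sqrt_sq_eq_abs]
  exact Real.sqrt_le_sqrt hω

lemma sinh_le_mul_cosh {u : ℝ} (hu : 0 ≤ u) : Real.sinh u ≤ u * Real.cosh u := by
  set f : ℝ → ℝ := fun v => v * Real.cosh v - Real.sinh v with hf
  have hderiv : ∀ x : ℝ, HasDerivAt f (x * Real.sinh x) x := by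
    intro x
    have h1 : HasDerivAt (fun v : ℝ => v * Real.cosh v)
        (1 * Real.cosh x + x * Real.sinh x) x :=
      (hasDerivAt_id x).mul (Real.hasDerivAt_cosh x)
    have h2 := h1.sub (Real.hasDerivAt_sinh x)
    refine h2.congr_deriv ?_
    ring
  have hmono : MonotoneOn f (Ici (0:ℝ)) := by
    apply monotoneOn_of_deriv_nonneg (convex_Ici 0)
    · exact fun x _ => ((hderiv x).differentiableAt).continuousAt.continuousWithinAt
    · exact fun x _ => ((hderiv x).differentiableAt).differentiableWithinAt
    · intro x hx
      rw [interior_Ici, mem_Ioi] at hx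
      rw [(hderiv x).deriv]
      exact mul_nonneg hx.le (by simp [hx.le])
  have h0 : f 0 ≤ f u := hmono (by simp) hu hu
  have hf0 : f 0 = 0 := by simp [hf]
  rw [hf0] at h0
  have : 0 ≤ u * Real.cosh u - Real.sinh u := h0
  linarith

lemma cosh_eq_one_add (t : ℝ) :
    Real.cosh t = 1 + 2 * Real.sinh (t/2) ^ 2 := by
  have h := Real.cosh_two_mul (t/2)
  have h2 := Real.cosh_sq (t/2)
  have : (2:ℝ) * (t/2) = t := by ring
  rw [this] at h
  rw [h, h2]; ring

lemma cosh_lower (t : ℝ) : 1 + t ^ 2 / 2 ≤ Real.cosh t := by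
  rw [cosh_eq_one_add t]
  have h1 : |t/2| ≤ Real.sinh |t/2| := Real.self_le_sinh_iff.mpr (abs_nonneg _)
  have h2 : (t/2) ^ 2 ≤ Real.sinh (t/2) ^ 2 := by
    rw [← sq_abs (t/2), ← sq_abs (Real.sinh (t/2)), Real.abs_sinh]
    exact pow_le_pow_left₀ (abs_nonneg _) h1 2
  nlinarith

lemma cosh_upper (t : ℝ) : Real.cosh t - 1 ≤ t ^ 2 / 2 * Real.cosh t := by
  have h1 : Real.sinh |t/2| ≤ |t/2| * Real.cosh |t/2| := sinh_le_mul_cosh (abs_nonneg _)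
  have h2 : Real.sinh (t/2) ^ 2 ≤ (t/2) ^ 2 * Real.cosh (t/2) ^ 2 := by
    rw [← sq_abs (Real.sinh (t/2)), Real.abs_sinh, ← sq_abs (t/2), ← Real.cosh_abs]
    calc Real.sinh |t/2| ^ 2 ≤ (|t/2| * Real.cosh |t/2|) ^ 2 := by
          apply pow_le_pow_left₀ (Real.sinh_nonneg_iff.mpr (abs_nonneg _)) h1
      _ = |t/2| ^ 2 * Real.cosh |t/2| ^ 2 := by ring
  have h3 : Real.cosh (t/2) ^ 2 = (Real.cosh t + 1) / 2 := by
    have h := cosh_eq_one_add t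
    have h2' := Real.cosh_sq (t/2)
    rw [h2']
    nlinarith [cosh_eq_one_add t]
  have h4 : (1:ℝ) ≤ Real.cosh t := Real.one_le_cosh t
  have h5 : Real.sinh (t/2) ^ 2 ≤ (t/2) ^ 2 * Real.cosh t := by nlinarith [sq_nonneg (t/2)]
  have h6 := cosh_eq_one_add t
  nlinarith [sq_nonneg t]

lemma key_bound {ν ω s : ℝ} (hω : 1 ≤ ω) :
    ν * (s / Real.sqrt ω) - ω * (Real.cosh (s / Real.sqrt ω) - 1) ≤ ν ^ 2 - s ^ 2 / 4 := by
  have hω0 : (0:ℝ) < ω := lt_of_lt_of_le one_pos hω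
  have hs1 : (1:ℝ) ≤ Real.sqrt ω := by
    rw [show (1:ℝ) = Real.sqrt 1 by simp]
    exact Real.sqrt_le_sqrt hω
  have ht2 : (s / Real.sqrt ω) ^ 2 = s ^ 2 / ω := by
    rw [div_pow, Real.sq_sqrt hω0.le]
  have b1 : ν * (s / Real.sqrt ω) ≤ |ν| * |s| := by
    calc ν * (s / Real.sqrt ω) ≤ |ν * (s / Real.sqrt ω)| := le_abs_self _
      _ = |ν| * (|s| / Real.sqrt ω) := by
          rw [abs_mul, abs_div, abs_of_nonneg (Real.sqrt_nonneg ω)]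
      _ ≤ |ν| * |s| := by
          apply mul_le_mul_of_nonneg_left _ (abs_nonneg ν)
          exact div_le_self (abs_nonneg s) hs1
  have b2 : s ^ 2 / 2 ≤ ω * (Real.cosh (s / Real.sqrt ω) - 1) := by
    have := cosh_lower (s / Real.sqrt ω)
    have h : (s / Real.sqrt ω) ^ 2 / 2 ≤ Real.cosh (s / Real.sqrt ω) - 1 := by linarith
    calc s ^ 2 / 2 = ω * ((s / Real.sqrt ω) ^ 2 / 2) := by
          rw [ht2]; field_simp
      _ ≤ ω * (Real.cosh (s / Real.sqrt ω) - 1) :=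
          mul_le_mul_of_nonneg_left h hω0.le
  have b3 : |ν| * |s| ≤ ν ^ 2 + s ^ 2 / 4 := by
    nlinarith [sq_nonneg (|ν| - |s| / 2), sq_abs ν, sq_abs s]
  linarith

/-- the main dominated-convergence limit. -/
lemma tendsto_I (ν : ℝ) :
    Tendsto (fun ω : ℝ => ∫ s : ℝ, G ν ω s) atTop (nhds (Real.sqrt (2 * π))) := by
  have hgauss : (∫ s : ℝ, Real.exp (-(2⁻¹ : ℝ) * s ^ 2)) = Real.sqrt (2 * π) := by
    rw [integral_gaussian]
    rw [show π / (2⁻¹:ℝ) = 2 * π by ring]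
  rw [← hgauss]
  apply tendsto_integral_filter_of_dominated_convergence
      (fun s => Real.exp (ν ^ 2) * Real.exp (-(4⁻¹ : ℝ) * s ^ 2))
  · filter_upwards with ω
    apply Continuous.aestronglyMeasurable
    unfold G
    fun_prop
  · filter_upwards [eventually_ge_atTop (1:ℝ)] with ω hω
    filter_upwards with s
    have hkey := key_bound (ν := ν) (s := s) hω
    unfold G
    rw [Real.norm_eq_abs, abs_of_pos (Real.exp_pos _), ← Real.exp_add]
    apply Real.exp_le_exp.mpr
    linarith
  · exact (integrable_exp_neg_mul_sq (by norm_num : (0:ℝ) < 4⁻¹)).const_mul _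
  · filter_upwards with s
    have hsqrt : Tendsto (fun ω : ℝ => s / Real.sqrt ω) atTop (nhds 0) := by
      simp only [div_eq_mul_inv]
      have := (tendsto_sqrt_atTop).inv_tendsto_atTop
      simpa using tendsto_const_nhds.mul this
    have h1 : Tendsto (fun ω : ℝ => ν * (s / Real.sqrt ω)) atTop (nhds 0) := by
      simpa using tendsto_const_nhds.mul hsqrt
    have h2 : Tendsto (fun ω : ℝ => ω * (Real.cosh (s / Real.sqrt ω) - 1)) atTop
        (nhds (s ^ 2 / 2)) := by
      have hupper : Tendsto (fun ω : ℝ => s ^ 2 / 2 * Real.cosh (s / Real.sqrt ω)) atTop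
          (nhds (s ^ 2 / 2)) := by
        have hc : Tendsto (fun ω : ℝ => Real.cosh (s / Real.sqrt ω)) atTop (nhds 1) := by
          have := (Real.continuous_cosh.tendsto 0).comp hsqrt
          rw [Real.cosh_zero] at this
          exact this
        simpa using tendsto_const_nhds.mul hc
      apply tendsto_of_tendsto_of_tendsto_of_le_of_le' (tendsto_const_nhds) hupper
      · filter_upwards [eventually_ge_atTop (1:ℝ)] with ω hω
        have hω0 : (0:ℝ) < ω := lt_of_lt_of_le one_pos hω
        have ht2 : (s / Real.sqrt ω) ^ 2 = s ^ 2 / ω := by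
          rw [div_pow, Real.sq_sqrt hω0.le]
        have := cosh_lower (s / Real.sqrt ω)
        have h : (s / Real.sqrt ω) ^ 2 / 2 ≤ Real.cosh (s / Real.sqrt ω) - 1 := by linarith
        calc s ^ 2 / 2 = ω * ((s / Real.sqrt ω) ^ 2 / 2) := by rw [ht2]; field_simp
          _ ≤ ω * (Real.cosh (s / Real.sqrt ω) - 1) := mul_le_mul_of_nonneg_left h hω0.le
      · filter_upwards [eventually_ge_atTop (1:ℝ)] with ω hω
        have hω0 : (0:ℝ) < ω := lt_of_lt_of_le one_pos hω
        have ht2 : (s / Real.sqrt ω) ^ 2 = s ^ 2 / ω := by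
          rw [div_pow, Real.sq_sqrt hω0.le]
        have hcu := cosh_upper (s / Real.sqrt ω)
        calc ω * (Real.cosh (s / Real.sqrt ω) - 1)
            ≤ ω * ((s / Real.sqrt ω) ^ 2 / 2 * Real.cosh (s / Real.sqrt ω)) :=
              mul_le_mul_of_nonneg_left hcu hω0.le
          _ = s ^ 2 / 2 * Real.cosh (s / Real.sqrt ω) := by
              rw [ht2]; field_simp
    have h3 := (Real.continuous_exp.tendsto _).comp (h1.sub h2)
    have : Real.exp (0 - s ^ 2 / 2) = Real.exp (-(2⁻¹ : ℝ) * s ^ 2) := by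
      congr 1; ring
    rw [this] at h3
    exact h3

lemma besselK_eq {ν ω : ℝ} (hω : 0 < ω) :
    besselK ν ω = (1/2) * Real.exp (-ω) * (Real.sqrt ω)⁻¹ * ∫ s : ℝ, G ν ω s := by
  have hsω : (0:ℝ) < Real.sqrt ω := Real.sqrt_pos.mpr hω
  -- step 1: substitution x = exp u
  have h1 : (∫ x in Ioi (0:ℝ), x ^ (ν - 1) * Real.exp (-(ω/2) * (x + x⁻¹)))
      = ∫ u : ℝ, Real.exp (ν * u - ω * Real.cosh u) := by
    have himg : Real.exp '' univ = Ioi (0:ℝ) := by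
      rw [image_univ, Real.range_exp]
    rw [← himg,
      integral_image_eq_integral_abs_deriv_smul MeasurableSet.univ
        (fun x _ => (Real.hasDerivAt_exp x).hasDerivWithinAt)
        (Real.exp_injective.injOn) _,
      MeasureTheory.setIntegral_univ]
    apply integral_congr_ae
    filter_upwards with u
    have hrw : Real.exp u ^ (ν - 1) = Real.exp (u * (ν - 1)) := by
      rw [Real.rpow_def_of_pos (Real.exp_pos u), Real.log_exp]
    rw [smul_eq_mul, abs_of_pos (Real.exp_pos u), hrw, ← Real.exp_neg,
      ← Real.exp_add, ← Real.exp_add]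
    congr 1
    rw [Real.cosh_eq]
    ring
  -- step 2: substitution u = s / √ω
  have h2 : (∫ s : ℝ, G ν ω s)
      = Real.sqrt ω * ∫ u : ℝ, Real.exp (ν * u - ω * (Real.cosh u - 1)) := by
    have := MeasureTheory.Measure.integral_comp_div
      (fun u : ℝ => Real.exp (ν * u - ω * (Real.cosh u - 1))) (Real.sqrt ω)
    simpa [G, abs_of_pos hsω, smul_eq_mul] using this
  have h3 : (∫ u : ℝ, Real.exp (ν * u - ω * (Real.cosh u - 1)))
      = Real.exp ω * ∫ u : ℝ, Real.exp (ν * u - ω * Real.cosh u) := by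
    rw [← integral_const_mul]
    apply integral_congr_ae
    filter_upwards with u
    rw [← Real.exp_add]
    congr 1
    ring
  rw [besselK, h1, h2, h3, Real.exp_neg]
  field_simp

end BesselKAux

theorem besselK_asymptotic (ν : ℝ) :
    Tendsto (fun ω : ℝ =>
        besselK ν ω / (Real.sqrt (π / 2) * Real.exp (-ω) * ω ^ (-(1:ℝ)/2)))
      atTop (nhds 1) := by
  have hπ : (0:ℝ) < π := Real.pi_pos
  have h2π : Real.sqrt (2 * π) ≠ 0 := by positivity
  have hsqrt2π : Real.sqrt (2 * π) = 2 * Real.sqrt (π / 2) := by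
    rw [show (2:ℝ) * π = 2 ^ 2 * (π / 2) by ring,
      Real.sqrt_mul (by positivity), Real.sqrt_sq (by norm_num)]
  have hI := (BesselKAux.tendsto_I ν).div_const (Real.sqrt (2 * π))
  rw [div_self h2π] at hI
  apply hI.congr'
  filter_upwards [eventually_gt_atTop (0:ℝ)] with ω hω
  have hsω : (0:ℝ) < Real.sqrt ω := Real.sqrt_pos.mpr hω
  have hpow : ω ^ (-(1:ℝ)/2) = (Real.sqrt ω)⁻¹ := by
    rw [show (-(1:ℝ)/2) = -(1/2 : ℝ) by ring, Real.rpow_neg hω.le,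
      ← Real.sqrt_eq_rpow]
  rw [BesselKAux.besselK_eq hω, hpow, hsqrt2π]
  have hexp : Real.exp (-ω) ≠ 0 := Real.exp_ne_zero _
  have hsπ : Real.sqrt (π / 2) ≠ 0 := by positivity
  field_simp
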